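/- Let W = W₁ × W₂ be a finite Coxeter group with S = S₁ ⊔ S₂. For every pair of transversal edges I ⇆ J in Q_{W₁} and every K ⊆ S₂ one has ι₁(X_{IJ}) ι₂(E_K) = X_{I⊔K, J⊔K} = ι₂(E_K) ι₁(X_{IJ}) in Ω(W,S). -/

import Mathlib

open scoped TensorProduct

noncomputable section

namespace WGraphPaper

variable (k : Type*) [CommRing k] {B B₁ B₂ : Type*}

/-! ### Gyoja's W-graph algebra with coefficients in `k`
(`Omega ℤ M` is the W-graph algebra `Ω(W,S)` itself, `Omega k M` is `kΩ`). -/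

/-- The free ring `k⟨e_b, x_b | b ∈ B⟩`; `Sum.inl b` encodes the generator `e_b` and
`Sum.inr b` encodes the generator `x_b`. -/
abbrev FreeGen (B : Type*) := FreeAlgebra k (B ⊕ B)

def eGen (b : B) : FreeGen k B := FreeAlgebra.ι k (Sum.inl b)
def xGen (b : B) : FreeGen k B := FreeAlgebra.ι k (Sum.inr b)

/-- `altProd a b n` is the alternating product `a * b * a * ⋯` with `n` factors. -/
def altProd {A : Type*} [Monoid A] : A → A → ℕ → A
  | _, _, 0 => 1
  | a, b, n + 1 => a * altProd b a n

/-- The braid commutator `Δ_m(a,b) = (a b a ⋯) - (b a b ⋯)` (`m` factors each). -/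
def braidComm {A : Type*} [Ring A] (m : ℕ) (a b : A) : A := altProd a b m - altProd b a m

/-- `ι(T_b) = -v⁻¹ e_b + v (1 - e_b) + x_b`, an element of `(FreeGen k B)[v,v⁻¹]`. -/
def iotaT (b : B) : LaurentPolynomial (FreeGen k B) :=
  LaurentPolynomial.C (-(eGen k b)) * LaurentPolynomial.T (-1)
    + LaurentPolynomial.C (1 - eGen k b) * LaurentPolynomial.T 1
    + LaurentPolynomial.C (xGen k b)

/-- The coefficient of `v^n` in a Laurent polynomial. -/
def lcoeff {R : Type*} [Semiring R] (p : LaurentPolynomial R) (n : ℤ) : R :=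
  (show ℤ →₀ R from p.coeff) n

/-- The defining relations of Gyoja's W-graph algebra: the relations (a) and (b) together
with the vanishing of all Laurent coefficients `y^γ(s,t)` of the braid commutators
`Δ_{m_{st}}(ι(T_s), ι(T_t))` (for `m_{st} < ∞`, i.e. `M s t ≠ 0`). -/
inductive OmegaRel (M : CoxeterMatrix B) : FreeGen k B → FreeGen k B → Prop
  | e_idem (b : B) : OmegaRel M (eGen k b * eGen k b) (eGen k b)
  | e_comm (b b' : B) : OmegaRel M (eGen k b * eGen k b') (eGen k b' * eGen k b)
  | ex (b : B) : OmegaRel M (eGen k b * xGen k b) (xGen k b)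
  | xe (b : B) : OmegaRel M (xGen k b * eGen k b) 0
  | braid (b b' : B) (h : M b b' ≠ 0) (γ : ℤ) :
      OmegaRel M (lcoeff (braidComm (M b b') (iotaT k b) (iotaT k b')) γ) 0

/-- Gyoja's W-graph algebra `Ω(W,S)` (for `k = ℤ`), resp. `kΩ(W,S)`, defined from
the Coxeter matrix of `(W,S)`. -/
abbrev Omega (M : CoxeterMatrix B) := RingQuot (OmegaRel k M)

/-- The image of the generator `e_b` in `Ω`. -/
def eOm (M : CoxeterMatrix B) (b : B) : Omega k M :=
  RingQuot.mkRingHom (OmegaRel k M) (eGen k b)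

/-- The image of the generator `x_b` in `Ω`. -/
def xOm (M : CoxeterMatrix B) (b : B) : Omega k M :=
  RingQuot.mkRingHom (OmegaRel k M) (xGen k b)

lemma commute_eOm (M : CoxeterMatrix B) (b b' : B) : Commute (eOm k M b) (eOm k M b') := by
  show _ = _
  rw [eOm, eOm, ← map_mul, ← map_mul]
  exact RingQuot.mkRingHom_rel (OmegaRel.e_comm b b')

lemma commute_oneSubEOm (M : CoxeterMatrix B) (b b' : B) :
    Commute (1 - eOm k M b) (1 - eOm k M b') :=
  (Commute.one_left _).sub_left ((Commute.one_right _).sub_right (commute_eOm k M b b'))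

variable [Fintype B] [DecidableEq B] [DecidableEq B₁] [DecidableEq B₂]

/-- The idempotent `E_I = (∏_{t ∈ I} e_t) (∏_{t ∈ S∖I} (1 - e_t))`. -/
def EOm (M : CoxeterMatrix B) (I : Finset B) : Omega k M :=
  (I.noncommProd (fun b => eOm k M b) (fun _ _ _ _ _ => commute_eOm k M _ _)) *
    ((Iᶜ).noncommProd (fun b => 1 - eOm k M b) (fun _ _ _ _ _ => commute_oneSubEOm k M _ _))

/-- The edge element `X_{IJ}^s = E_I x_s E_J`. -/
def XOm (M : CoxeterMatrix B) (I J : Finset B) (s : B) : Omega k M :=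
  EOm k M I * xOm k M s * EOm k M J

/-- `I ← J` is an edge of the compatibility graph `Q_W`: `I ∖ J ≠ ∅` and no element of
`I ∖ J` commutes (in `W`, i.e. `m_{st} = 2`) with an element of `J ∖ I`. -/
def QEdge (M : CoxeterMatrix B) (I J : Finset B) : Prop :=
  (I \ J).Nonempty ∧ ∀ s ∈ I \ J, ∀ t ∈ J \ I, M s t ≠ 2

/-- `I ⇆ J`: `I` and `J` are joined by a pair of transversal edges of `Q_W`. -/
def Transversal (M : CoxeterMatrix B) (I J : Finset B) : Prop :=
  QEdge M I J ∧ (J \ I).Nonempty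

/-- The generators of the subalgebra `Ψ(W,S)`: all `E_I` and all transversal edge
elements `X_{IJ}`. -/
def psiGens (M : CoxeterMatrix B) : Set (Omega k M) :=
  {a | ∃ I : Finset B, a = EOm k M I} ∪
    {a | ∃ I J : Finset B, ∃ s : B, Transversal M I J ∧ s ∈ I \ J ∧ a = XOm k M I J s}

/-- The subring `Ψ(W,S) ⊆ Ω(W,S)` generated by all `E_I` and all transversal edges. -/
def Psi (M : CoxeterMatrix B) : Subring (Omega k M) := Subring.closure (psiGens k M)

/-- The subalgebra `kΨ(W,S) ⊆ kΩ(W,S)` generated by all `E_I` and all transversal edges. -/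
def PsiAlg (M : CoxeterMatrix B) : Subalgebra k (Omega k M) :=
  Algebra.adjoin k (psiGens k M)

/-! ### Products of Coxeter systems -/

/-- The Coxeter matrix of the product `W₁ × W₂`, on `S = S₁ ⊔ S₂` (each element of `S₁`
commutes with each element of `S₂`). -/
def prodMatrix (M₁ : CoxeterMatrix B₁) (M₂ : CoxeterMatrix B₂) : CoxeterMatrix (B₁ ⊕ B₂) where
  M i j :=
    match i, j with
    | Sum.inl a, Sum.inl b => M₁ a b
    | Sum.inr a, Sum.inr b => M₂ a b
    | _, _ => 2
  isSymm := by
    unfold Matrix.IsSymm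
    ext i j
    rcases i with a | a <;> rcases j with b | b <;>
      simp only [Matrix.transpose_apply] <;>
      first
        | exact M₁.symmetric b a
        | exact M₂.symmetric b a
        | rfl
  diagonal i := by rcases i with a | a <;> simp [CoxeterMatrix.diagonal]
  off_diagonal i j h := by
    rcases i with a | a <;> rcases j with b | b
    · exact M₁.off_diagonal a b (by rintro rfl; exact h rfl)
    · simp
    · simp
    · exact M₂.off_diagonal a b (by rintro rfl; exact h rfl)

def inlEmb : B₁ ↪ B₁ ⊕ B₂ := ⟨Sum.inl, Sum.inl_injective⟩
def inrEmb : B₂ ↪ B₁ ⊕ B₂ := ⟨Sum.inr, Sum.inr_injective⟩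

/-- The subset `I ⊔ K` of `S = S₁ ⊔ S₂`, for `I ⊆ S₁` and `K ⊆ S₂`. -/
def fjoin (I : Finset B₁) (K : Finset B₂) : Finset (B₁ ⊕ B₂) :=
  I.map inlEmb ∪ K.map inrEmb

/-- The part `I₁ = I ∩ S₁` of a subset `I ⊆ S = S₁ ⊔ S₂`. -/
def part1 (I : Finset (B₁ ⊕ B₂)) : Finset B₁ :=
  I.preimage Sum.inl Sum.inl_injective.injOn

/-- The part `I₂ = I ∩ S₂` of a subset `I ⊆ S = S₁ ⊔ S₂`. -/
def part2 (I : Finset (B₁ ⊕ B₂)) : Finset B₂ :=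
  I.preimage Sum.inr Sum.inr_injective.injOn

variable (M₁ : CoxeterMatrix B₁) (M₂ : CoxeterMatrix B₂)

/-- `f` is the parabolic morphism `ι₁ : Ω₁ → Ω` (it sends `e_s ↦ e_s`, `x_s ↦ x_s`
for `s ∈ S₁`). -/
def Parab1Cond (f : Omega k M₁ → Omega k (prodMatrix M₁ M₂)) : Prop :=
  ∀ b : B₁, f (eOm k M₁ b) = eOm k (prodMatrix M₁ M₂) (Sum.inl b) ∧
    f (xOm k M₁ b) = xOm k (prodMatrix M₁ M₂) (Sum.inl b)

/-- `f` is the parabolic morphism `ι₂ : Ω₂ → Ω` (it sends `e_s ↦ e_s`, `x_s ↦ x_s`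
for `s ∈ S₂`). -/
def Parab2Cond (f : Omega k M₂ → Omega k (prodMatrix M₁ M₂)) : Prop :=
  ∀ b : B₂, f (eOm k M₂ b) = eOm k (prodMatrix M₁ M₂) (Sum.inr b) ∧
    f (xOm k M₂ b) = xOm k (prodMatrix M₁ M₂) (Sum.inr b)

/-- `t` is the morphism `τ : Ω → Ω₁ ⊗ Ω₂` of the paper: it sends `e_s ↦ e_s ⊗ 1`,
`x_s ↦ x_s ⊗ 1` for `s ∈ S₁` and `e_s ↦ 1 ⊗ e_s`, `x_s ↦ 1 ⊗ x_s` for `s ∈ S₂`. -/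
def TauCond (t : Omega k (prodMatrix M₁ M₂) → Omega k M₁ ⊗[k] Omega k M₂) : Prop :=
  (∀ b : B₁, t (eOm k (prodMatrix M₁ M₂) (Sum.inl b)) = eOm k M₁ b ⊗ₜ[k] 1 ∧
      t (xOm k (prodMatrix M₁ M₂) (Sum.inl b)) = xOm k M₁ b ⊗ₜ[k] 1) ∧
  (∀ b : B₂, t (eOm k (prodMatrix M₁ M₂) (Sum.inr b)) = 1 ⊗ₜ[k] eOm k M₂ b ∧
      t (xOm k (prodMatrix M₁ M₂) (Sum.inr b)) = 1 ⊗ₜ[k] xOm k M₂ b)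



/-- The coefficientwise extension of a ring homomorphism to Laurent polynomial rings. -/
def laurentMap {R A : Type*} [Semiring R] [Semiring A] (f : R →+* A) :
    LaurentPolynomial R →+* LaurentPolynomial A :=
  AddMonoidAlgebra.liftNCRingHom (LaurentPolynomial.C.comp f)
    { toFun := fun n => LaurentPolynomial.T (Multiplicative.toAdd n)
      map_one' := LaurentPolynomial.T_zero
      map_mul' := fun _ _ => LaurentPolynomial.T_add _ _ }
    (fun _ n => (LaurentPolynomial.commute_T (Multiplicative.toAdd n) _).symm)

/-- `k` is a good ring for `(W,S)`: it contains `2cos(2π/m_{st})` for all `s,t ∈ S`. -/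
def GoodRing (M : CoxeterMatrix B) (k : Subring ℂ) : Prop :=
  ∀ i j : B, M i j ≠ 0 → (2 * Complex.cos (2 * Real.pi / (M i j : ℂ))) ∈ k

/-- The irreducible complex characters of a finite group `G`. -/
def IrrChar (G : Type) [Group G] : Type :=
  {χ : G → ℂ // ∃ V : FDRep ℂ G, CategoryTheory.Simple V ∧ χ = FDRep.character V}

/-- The degree `d_λ` of an irreducible character `λ` (its value at `1`). -/
def IrrChar.degree {G : Type} [Group G] (χ : IrrChar G) : ℕ := ⌊(χ.val 1).re⌋₊

variable {ι : Type*}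

/-- (Z1): the `F^λ` are a decomposition of the identity into orthogonal idempotents. -/
def Z1 {A : Type*} [Ring A] (F : ι → A) : Prop :=
  (∀ l, F l * F l = F l) ∧ (∀ l m, l ≠ m → F l * F m = 0) ∧ ∑ᶠ l, F l = 1

variable [Fintype B] [DecidableEq B]

/-- (Z2): the decomposition is compatible with the one coming from the path-algebra
structure: `E_I F^λ = F^λ E_I`. -/
def Z2 (M : CoxeterMatrix B) (F : ι → Omega k M) : Prop :=
  ∀ l (I : Finset B), EOm k M I * F l = F l * EOm k M I

/-- (Z3), with a specified partial order `le`: only "downward edges" exist,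
i.e. `F^λ Ω F^μ ≠ 0 → λ ⪯ μ`. -/
def Z3At {A : Type*} [Ring A] (F : ι → A) (le : ι → ι → Prop) : Prop :=
  ∀ l m, (∃ a : A, F l * a * F m ≠ 0) → le l m

/-- (Z3): there is a partial order on `Irr(W)` such that only "downward edges" exist. -/
def Z3 {A : Type*} [Ring A] (F : ι → A) : Prop :=
  ∃ le : ι → ι → Prop, IsPartialOrder ι le ∧ Z3At F le

/-- (Z4): there are surjective `k`-algebra morphisms `k^{d_λ×d_λ} ↠ F^λ kΩ F^λ`. -/
def Z4 (M : CoxeterMatrix B) (F : ι → Omega k M) (d : ι → ℕ) : Prop :=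
  ∀ l, ∃ ψ : Matrix (Fin (d l)) (Fin (d l)) k →ₗ[k] Omega k M,
    (∀ x y, ψ (x * y) = ψ x * ψ y) ∧ ψ 1 = F l ∧
      Set.range ψ = {z | ∃ a : Omega k M, z = F l * a * F l}

/-- (Z5): `F^λ X_{IJ} F^λ ∈ kΨ(W,S)` for all edges `I ← J` of `Q_W`. -/
def Z5 (M : CoxeterMatrix B) (F : ι → Omega k M) : Prop :=
  ∀ l (I J : Finset B) (s : B), QEdge M I J → s ∈ I \ J →
    F l * XOm k M I J s * F l ∈ PsiAlg k M

/-- (Z6): `F^λ ∈ kΨ(W,S)`. -/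
def Z6 (M : CoxeterMatrix B) (F : ι → Omega k M) : Prop :=
  ∀ l, F l ∈ PsiAlg k M

/-- The family satisfies all of (Z1)–(Z6), i.e. the strong W-graph decomposition
conjecture holds via this family (`d` is the degree function on `Irr(W)`). -/
def StrongZ (M : CoxeterMatrix B) (F : ι → Omega k M) (d : ι → ℕ) : Prop :=
  Z1 F ∧ Z2 k M F ∧ Z3 F ∧ Z4 k M F d ∧ Z5 k M F ∧ Z6 k M F

/-- The maximal length (number of steps) of a strict chain for the relation `le`. -/
def orderHeight (le : ι → ι → Prop) : ℕ :=
  sSup {n | ∃ c : Fin (n + 1) → ι, Function.Injective c ∧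
    ∀ i j : Fin (n + 1), i < j → le (c i) (c j)}



/-! ### Auxiliary lemmas for Statement 11 -/

section AuxBasic

variable {k : Type*} [CommRing k] {B : Type*}

lemma lcoeff_add {R : Type*} [Semiring R] (p q : LaurentPolynomial R) (n : ℤ) :
    lcoeff (p + q) n = lcoeff p n + lcoeff q n := by
  unfold lcoeff; rw [AddMonoidAlgebra.coeff_add]; rfl

lemma lcoeff_sub {R : Type*} [Ring R] (p q : LaurentPolynomial R) (n : ℤ) :
    lcoeff (p - q) n = lcoeff p n - lcoeff q n := by
  unfold lcoeff; rw [AddMonoidAlgebra.coeff_sub]; rfl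

lemma lcoeff_single {R : Type*} [Semiring R] (m : ℤ) (r : R) (n : ℤ) :
    lcoeff (AddMonoidAlgebra.single m r) n = if m = n then r else 0 :=
  by unfold lcoeff; rw [AddMonoidAlgebra.coeff_single]; exact Finsupp.single_apply

lemma iotaT_eq (b : B) :
    iotaT k b = AddMonoidAlgebra.single (-1 : ℤ) (-(eGen k b))
      + AddMonoidAlgebra.single (1 : ℤ) (1 - eGen k b)
      + AddMonoidAlgebra.single (0 : ℤ) (xGen k b) := by
  rw [iotaT, ← LaurentPolynomial.single_eq_C_mul_T, ← LaurentPolynomial.single_eq_C_mul_T]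
  congr 1

lemma braid_coeff (b b' : B) :
    lcoeff (braidComm 2 (iotaT k b) (iotaT k b')) (-1)
      = (-(eGen k b) * xGen k b' + xGen k b * -(eGen k b'))
        - (-(eGen k b') * xGen k b + xGen k b' * -(eGen k b)) := by
  rw [braidComm]
  show lcoeff (iotaT k b * (iotaT k b' * 1) - iotaT k b' * (iotaT k b * 1)) (-1) = _
  rw [mul_one, mul_one, iotaT_eq, iotaT_eq]
  simp only [add_mul, mul_add, AddMonoidAlgebra.single_mul_single, lcoeff_sub, lcoeff_add,
    lcoeff_single]
  norm_num
  abel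

end AuxBasic

section AuxBasic2

variable (k : Type*) [CommRing k] {B : Type*}

/-- basic relations in `Ω` -/
lemma eOm_mul_self (M : CoxeterMatrix B) (b : B) : eOm k M b * eOm k M b = eOm k M b := by
  rw [eOm, ← map_mul]
  exact RingQuot.mkRingHom_rel (OmegaRel.e_idem b)

lemma eOm_mul_xOm (M : CoxeterMatrix B) (b : B) : eOm k M b * xOm k M b = xOm k M b := by
  rw [eOm, xOm, ← map_mul]
  exact RingQuot.mkRingHom_rel (OmegaRel.ex b)

lemma xOm_mul_eOm (M : CoxeterMatrix B) (b : B) : xOm k M b * eOm k M b = 0 := by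
  rw [eOm, xOm, ← map_mul]
  rw [show (0 : Omega k M) = RingQuot.mkRingHom (OmegaRel k M) 0 by rw [map_zero]]
  exact RingQuot.mkRingHom_rel (OmegaRel.xe b)

lemma oneSubEOm_mul_self (M : CoxeterMatrix B) (b : B) :
    (1 - eOm k M b) * (1 - eOm k M b) = 1 - eOm k M b := by
  rw [mul_sub, mul_one, sub_mul, one_mul, eOm_mul_self, sub_self, sub_zero]

lemma eOm_mul_oneSub_self (M : CoxeterMatrix B) (b : B) :
    eOm k M b * (1 - eOm k M b) = 0 := by
  rw [mul_sub, mul_one, eOm_mul_self, sub_self]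

lemma commute_eOm_oneSub (M : CoxeterMatrix B) (b b' : B) :
    Commute (eOm k M b) (1 - eOm k M b') :=
  (Commute.one_right _).sub_right (commute_eOm k M b b')

end AuxBasic2

section NoncommProdAux

variable {α : Type*} {Mo : Type*} [Monoid Mo]

lemma noncommProd_mul_absorb [DecidableEq α] (s : Finset α) (f : α → Mo) (comm) {a : α}
    (ha : a ∈ s) (idem : f a * f a = f a) :
    s.noncommProd f comm * f a = s.noncommProd f comm := by
  rw [← Finset.noncommProd_erase_mul s ha f comm, mul_assoc, idem]

lemma mul_noncommProd_absorb [DecidableEq α] (s : Finset α) (f : α → Mo) (comm) {a : α}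
    (ha : a ∈ s) (idem : f a * f a = f a) :
    f a * s.noncommProd f comm = s.noncommProd f comm := by
  rw [← Finset.mul_noncommProd_erase s ha f comm, ← mul_assoc, idem]

lemma mul_noncommProd_eq_zero {R : Type*} [Ring R] [DecidableEq α] (s : Finset α) (f : α → R)
    (comm) {a : α} (ha : a ∈ s) {y : R} (hz : y * f a = 0) :
    y * s.noncommProd f comm = 0 := by
  rw [← Finset.mul_noncommProd_erase s ha f comm, ← mul_assoc, hz, zero_mul]

lemma noncommProd_idem (s : Finset α) (f : α → Mo) (comm)
    (idem : ∀ a ∈ s, f a * f a = f a) :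
    s.noncommProd f comm * s.noncommProd f comm = s.noncommProd f comm := by
  classical
  induction s using Finset.cons_induction with
  | empty => simp
  | cons a s ha ih =>
      rw [Finset.noncommProd_cons]
      set Q := s.noncommProd f (comm.mono fun _ => Finset.mem_cons.2 ∘ .inr) with hQ
      have hc : Commute (f a) Q := by
        refine Finset.noncommProd_commute _ _ _ _ fun x hx => ?_
        exact comm.of_refl (Finset.mem_cons_self a s) (Finset.mem_cons.2 (.inr hx))
      have hQQ : Q * Q = Q :=
        ih _ fun x hx => idem x (Finset.mem_cons.2 (.inr hx))
      calc f a * Q * (f a * Q)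
          = f a * (Q * f a) * Q := by simp only [mul_assoc]
        _ = f a * f a * (Q * Q) := by rw [← hc.eq]; simp only [mul_assoc]
        _ = f a * Q := by rw [idem a (Finset.mem_cons_self a s), hQQ]

lemma noncommProd_map_emb {β : Type*} (e : α ↪ β) (s : Finset α) (f : β → Mo) (comm) :
    (s.map e).noncommProd f comm
      = s.noncommProd (fun a => f (e a))
          (fun _ hx _ hy h => comm (Finset.mem_map_of_mem e hx) (Finset.mem_map_of_mem e hy)
            (fun hc => h (e.injective hc))) := by
  simp only [Finset.noncommProd, Finset.map_val, Multiset.map_map]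
  rfl

end NoncommProdAux
section ProdAux

variable (k : Type*) [CommRing k] {B₁ B₂ : Type*}
variable [Fintype B₁] [DecidableEq B₁] [Fintype B₂] [DecidableEq B₂]
variable (M₁ : CoxeterMatrix B₁) (M₂ : CoxeterMatrix B₂)

local notation "P" => prodMatrix M₁ M₂

lemma neg_trick {R : Type*} [Ring R] {Es Et Xs Xt : R}
    (h : -Es * Xt + Xs * -Et = -Et * Xs + Xt * -Es) :
    Et * Xs + Xt * Es = Es * Xt + Xs * Et := by
  have hD : -(Es * Xt + Xs * Et) = -(Et * Xs + Xt * Es) := by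
    calc -(Es * Xt + Xs * Et) = -Es * Xt + Xs * -Et := by
          rw [neg_add, neg_mul, mul_neg]
      _ = -Et * Xs + Xt * -Es := h
      _ = -(Et * Xs + Xt * Es) := by rw [neg_add, neg_mul, mul_neg]
  exact (neg_inj.mp hD).symm

set_option linter.unusedSectionVars false

lemma star_rel (s : B₁) (t : B₂) :
    eOm k P (Sum.inr t) * xOm k P (Sum.inl s) + xOm k P (Sum.inr t) * eOm k P (Sum.inl s)
      = eOm k P (Sum.inl s) * xOm k P (Sum.inr t)
        + xOm k P (Sum.inl s) * eOm k P (Sum.inr t) := by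
  have hm : P (Sum.inl s) (Sum.inr t) ≠ 0 := by
    show (2 : ℕ) ≠ 0
    norm_num
  have h := RingQuot.mkRingHom_rel
    (OmegaRel.braid (k := k) (M := P) (Sum.inl s) (Sum.inr t) hm (-1))
  rw [show P (Sum.inl s) (Sum.inr t) = 2 from rfl, braid_coeff, map_zero] at h
  simp only [map_sub, map_add, map_mul, map_neg] at h
  rw [sub_eq_zero] at h
  simp only [eOm, xOm]
  exact neg_trick h

lemma x_r_e_l (s : B₁) (t : B₂) :
    xOm k P (Sum.inr t) * eOm k P (Sum.inl s)
      = eOm k P (Sum.inl s) * (xOm k P (Sum.inr t) * eOm k P (Sum.inl s)) := by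
  have h := congrArg (fun z => z * eOm k P (Sum.inl s)) (star_rel k M₁ M₂ s t)
  simp only [add_mul, mul_assoc] at h
  rw [xOm_mul_eOm, eOm_mul_self, mul_zero, zero_add] at h
  rw [(commute_eOm k P (Sum.inr t) (Sum.inl s)).eq] at h
  rw [← mul_assoc (xOm k P (Sum.inl s)), xOm_mul_eOm, zero_mul, add_zero] at h
  exact h

lemma oneSub_x_e (s : B₁) (t : B₂) :
    (1 - eOm k P (Sum.inl s)) * (xOm k P (Sum.inr t) * eOm k P (Sum.inl s)) = 0 := by
  rw [sub_mul, one_mul, ← x_r_e_l, sub_self]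

/-- The product `∏_{b ∈ I} e_{ι₁ b}`. -/
def Pe1 (I : Finset B₁) : Omega k P :=
  I.noncommProd (fun b => eOm k P (Sum.inl b)) fun _ _ _ _ _ => commute_eOm k _ _ _

/-- The product `∏_{b ∈ I} (1 - e_{ι₁ b})`. -/
def Pn1 (I : Finset B₁) : Omega k P :=
  I.noncommProd (fun b => 1 - eOm k P (Sum.inl b)) fun _ _ _ _ _ => commute_oneSubEOm k _ _ _

/-- The product `∏_{b ∈ K} e_{ι₂ b}`. -/
def Pe2 (K : Finset B₂) : Omega k P :=
  K.noncommProd (fun b => eOm k P (Sum.inr b)) fun _ _ _ _ _ => commute_eOm k _ _ _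

/-- The product `∏_{b ∈ K} (1 - e_{ι₂ b})`. -/
def Pn2 (K : Finset B₂) : Omega k P :=
  K.noncommProd (fun b => 1 - eOm k P (Sum.inr b)) fun _ _ _ _ _ => commute_oneSubEOm k _ _ _

/-- `ι₁(E_I)`, as an element of `Ω(W,S)`. -/
def E1 (I : Finset B₁) : Omega k P := Pe1 k M₁ M₂ I * Pn1 k M₁ M₂ Iᶜ

/-- `ι₂(E_K)`, as an element of `Ω(W,S)`. -/
def E2 (K : Finset B₂) : Omega k P := Pe2 k M₁ M₂ K * Pn2 k M₁ M₂ Kᶜ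

lemma commute_Pe1 (y : Omega k P) (I : Finset B₁)
    (h : ∀ b, Commute y (eOm k P (Sum.inl b))) : Commute y (Pe1 k M₁ M₂ I) :=
  Finset.noncommProd_commute _ _ _ _ fun x _ => h x

lemma commute_Pn1 (y : Omega k P) (I : Finset B₁)
    (h : ∀ b, Commute y (eOm k P (Sum.inl b))) : Commute y (Pn1 k M₁ M₂ I) :=
  Finset.noncommProd_commute _ _ _ _ fun x _ => (Commute.one_right _).sub_right (h x)

lemma commute_Pe2 (y : Omega k P) (K : Finset B₂)
    (h : ∀ b, Commute y (eOm k P (Sum.inr b))) : Commute y (Pe2 k M₁ M₂ K) :=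
  Finset.noncommProd_commute _ _ _ _ fun x _ => h x

lemma commute_Pn2 (y : Omega k P) (K : Finset B₂)
    (h : ∀ b, Commute y (eOm k P (Sum.inr b))) : Commute y (Pn2 k M₁ M₂ K) :=
  Finset.noncommProd_commute _ _ _ _ fun x _ => (Commute.one_right _).sub_right (h x)

lemma commute_eOm_E1 (c : B₁ ⊕ B₂) (I : Finset B₁) : Commute (eOm k P c) (E1 k M₁ M₂ I) :=
  Commute.mul_right (commute_Pe1 k M₁ M₂ _ _ fun b => commute_eOm k P c (Sum.inl b))
    (commute_Pn1 k M₁ M₂ _ _ fun b => commute_eOm k P c (Sum.inl b))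

lemma commute_eOm_E2 (c : B₁ ⊕ B₂) (K : Finset B₂) : Commute (eOm k P c) (E2 k M₁ M₂ K) :=
  Commute.mul_right (commute_Pe2 k M₁ M₂ _ _ fun b => commute_eOm k P c (Sum.inr b))
    (commute_Pn2 k M₁ M₂ _ _ fun b => commute_eOm k P c (Sum.inr b))

lemma commute_E1_E2 (I : Finset B₁) (K : Finset B₂) :
    Commute (E1 k M₁ M₂ I) (E2 k M₁ M₂ K) :=
  Commute.mul_right
    (commute_Pe2 k M₁ M₂ _ _ fun b => (commute_eOm_E1 k M₁ M₂ (Sum.inr b) I).symm)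
    (commute_Pn2 k M₁ M₂ _ _ fun b => (commute_eOm_E1 k M₁ M₂ (Sum.inr b) I).symm)

lemma Pe1_mul_e (I : Finset B₁) {b : B₁} (hb : b ∈ I) :
    Pe1 k M₁ M₂ I * eOm k P (Sum.inl b) = Pe1 k M₁ M₂ I := by
  rw [Pe1]; exact noncommProd_mul_absorb I (fun b => eOm k P (Sum.inl b)) _ hb (eOm_mul_self k P (Sum.inl b))

lemma e_mul_Pe1 (I : Finset B₁) {b : B₁} (hb : b ∈ I) :
    eOm k P (Sum.inl b) * Pe1 k M₁ M₂ I = Pe1 k M₁ M₂ I := by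
  rw [Pe1]; exact mul_noncommProd_absorb I (fun b => eOm k P (Sum.inl b)) _ hb (eOm_mul_self k P (Sum.inl b))

lemma Pn1_mul_oneSub (I : Finset B₁) {b : B₁} (hb : b ∈ I) :
    Pn1 k M₁ M₂ I * (1 - eOm k P (Sum.inl b)) = Pn1 k M₁ M₂ I := by
  rw [Pn1]; exact noncommProd_mul_absorb I (fun b => 1 - eOm k P (Sum.inl b)) _ hb (oneSubEOm_mul_self k P (Sum.inl b))

lemma e_mul_Pn1_zero (I : Finset B₁) {b : B₁} (hb : b ∈ I) :
    eOm k P (Sum.inl b) * Pn1 k M₁ M₂ I = 0 := by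
  rw [Pn1]; exact mul_noncommProd_eq_zero I (fun b => 1 - eOm k P (Sum.inl b)) _ hb (eOm_mul_oneSub_self k P (Sum.inl b))

lemma E1_mul_e (I : Finset B₁) {b : B₁} (hb : b ∈ I) :
    E1 k M₁ M₂ I * eOm k P (Sum.inl b) = E1 k M₁ M₂ I := by
  rw [E1, mul_assoc,
    ← (commute_Pn1 k M₁ M₂ (eOm k P (Sum.inl b)) Iᶜ
        fun x => commute_eOm k P (Sum.inl b) (Sum.inl x)).eq,
    ← mul_assoc, Pe1_mul_e k M₁ M₂ I hb]

lemma e_mul_E1 (I : Finset B₁) {b : B₁} (hb : b ∈ I) :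
    eOm k P (Sum.inl b) * E1 k M₁ M₂ I = E1 k M₁ M₂ I := by
  rw [E1, ← mul_assoc, e_mul_Pe1 k M₁ M₂ I hb]

lemma E1_mul_oneSub (I : Finset B₁) {b : B₁} (hb : b ∉ I) :
    E1 k M₁ M₂ I * (1 - eOm k P (Sum.inl b)) = E1 k M₁ M₂ I := by
  rw [E1, mul_assoc, Pn1_mul_oneSub k M₁ M₂ Iᶜ (Finset.mem_compl.2 hb)]

lemma e_mul_E1_zero (I : Finset B₁) {b : B₁} (hb : b ∉ I) :
    eOm k P (Sum.inl b) * E1 k M₁ M₂ I = 0 := by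
  rw [E1, ← mul_assoc,
    (commute_Pe1 k M₁ M₂ (eOm k P (Sum.inl b)) I
      fun x => commute_eOm k P (Sum.inl b) (Sum.inl x)).eq,
    mul_assoc, e_mul_Pn1_zero k M₁ M₂ Iᶜ (Finset.mem_compl.2 hb), mul_zero]

lemma E2_idem (K : Finset B₂) : E2 k M₁ M₂ K * E2 k M₁ M₂ K = E2 k M₁ M₂ K := by
  have hPe : Pe2 k M₁ M₂ K * Pe2 k M₁ M₂ K = Pe2 k M₁ M₂ K := by
    rw [Pe2]; exact noncommProd_idem K (fun b => eOm k P (Sum.inr b)) _ fun a _ => eOm_mul_self k P (Sum.inr a)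
  have hPn : Pn2 k M₁ M₂ Kᶜ * Pn2 k M₁ M₂ Kᶜ = Pn2 k M₁ M₂ Kᶜ := by
    rw [Pn2]; exact noncommProd_idem Kᶜ (fun b => 1 - eOm k P (Sum.inr b)) _ fun a _ => oneSubEOm_mul_self k P (Sum.inr a)
  have hc : Commute (Pn2 k M₁ M₂ Kᶜ) (Pe2 k M₁ M₂ K) :=
    commute_Pe2 k M₁ M₂ _ _ fun b =>
      (commute_Pn2 k M₁ M₂ (eOm k P (Sum.inr b)) Kᶜ
        fun x => commute_eOm k P (Sum.inr b) (Sum.inr x)).symm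
  rw [E2]
  calc Pe2 k M₁ M₂ K * Pn2 k M₁ M₂ Kᶜ * (Pe2 k M₁ M₂ K * Pn2 k M₁ M₂ Kᶜ)
      = Pe2 k M₁ M₂ K * (Pn2 k M₁ M₂ Kᶜ * Pe2 k M₁ M₂ K) * Pn2 k M₁ M₂ Kᶜ := by
        simp only [mul_assoc]
    _ = Pe2 k M₁ M₂ K * Pe2 k M₁ M₂ K * (Pn2 k M₁ M₂ Kᶜ * Pn2 k M₁ M₂ Kᶜ) := by
        rw [hc.eq]; simp only [mul_assoc]
    _ = Pe2 k M₁ M₂ K * Pn2 k M₁ M₂ Kᶜ := by rw [hPe, hPn]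

lemma fjoin_compl (I : Finset B₁) (K : Finset B₂) :
    (fjoin I K)ᶜ = Iᶜ.map inlEmb ∪ Kᶜ.map inrEmb := by
  ext x
  cases x <;> simp [fjoin, inlEmb, inrEmb]

lemma fjoin_disjoint (I : Finset B₁) (K : Finset B₂) :
    Disjoint (I.map inlEmb) (K.map inrEmb) := by
  rw [Finset.disjoint_left]
  rintro x hx hx'
  rw [Finset.mem_map] at hx hx'
  obtain ⟨a, -, rfl⟩ := hx
  obtain ⟨b, -, hb⟩ := hx'
  simp [inlEmb, inrEmb] at hb

lemma EOm_fjoin (I : Finset B₁) (K : Finset B₂) :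
    EOm k P (fjoin I K) = E1 k M₁ M₂ I * E2 k M₁ M₂ K := by
  have he : (fjoin I K).noncommProd (fun b => eOm k P b)
        (fun _ _ _ _ _ => commute_eOm k P _ _)
      = Pe1 k M₁ M₂ I * Pe2 k M₁ M₂ K := by
    refine (Finset.noncommProd_congr (show fjoin I K = I.map inlEmb ∪ K.map inrEmb from rfl)
        (fun x _ => rfl) _).trans ?_
    refine (Finset.noncommProd_union_of_disjoint (fjoin_disjoint I K) _ _).trans ?_
    congr 1
    · rw [noncommProd_map_emb inlEmb I (fun b => eOm k P b)]; rfl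
    · rw [noncommProd_map_emb inrEmb K (fun b => eOm k P b)]; rfl
  have hn : ((fjoin I K)ᶜ).noncommProd (fun b => 1 - eOm k P b)
        (fun _ _ _ _ _ => commute_oneSubEOm k P _ _)
      = Pn1 k M₁ M₂ Iᶜ * Pn2 k M₁ M₂ Kᶜ := by
    refine (Finset.noncommProd_congr (fjoin_compl I K) (fun x _ => rfl) _).trans ?_
    refine (Finset.noncommProd_union_of_disjoint (fjoin_disjoint Iᶜ Kᶜ) _ _).trans ?_
    congr 1
    · rw [noncommProd_map_emb inlEmb Iᶜ (fun b => 1 - eOm k P b)]; rfl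
    · rw [noncommProd_map_emb inrEmb Kᶜ (fun b => 1 - eOm k P b)]; rfl
  have hc : Commute (Pe2 k M₁ M₂ K) (Pn1 k M₁ M₂ Iᶜ) :=
    (commute_Pe2 k M₁ M₂ _ _ fun b =>
      (commute_Pn1 k M₁ M₂ (eOm k P (Sum.inr b)) Iᶜ
        fun x => commute_eOm k P (Sum.inr b) (Sum.inl x)).symm).symm
  rw [EOm, he, hn, E1, E2]
  calc Pe1 k M₁ M₂ I * Pe2 k M₁ M₂ K * (Pn1 k M₁ M₂ Iᶜ * Pn2 k M₁ M₂ Kᶜ)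
      = Pe1 k M₁ M₂ I * (Pe2 k M₁ M₂ K * Pn1 k M₁ M₂ Iᶜ) * Pn2 k M₁ M₂ Kᶜ := by
        simp only [mul_assoc]
    _ = Pe1 k M₁ M₂ I * (Pn1 k M₁ M₂ Iᶜ * Pe2 k M₁ M₂ K) * Pn2 k M₁ M₂ Kᶜ := by
        rw [hc.eq]
    _ = Pe1 k M₁ M₂ I * Pn1 k M₁ M₂ Iᶜ * (Pe2 k M₁ M₂ K * Pn2 k M₁ M₂ Kᶜ) := by
        simp only [mul_assoc]

lemma x_mid_zero (I J : Finset B₁) {t' : B₁} (ht1 : t' ∈ J) (ht2 : t' ∉ I) (t : B₂) :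
    E1 k M₁ M₂ I * xOm k P (Sum.inr t) * E1 k M₁ M₂ J = 0 := by
  conv_lhs => rw [← E1_mul_oneSub k M₁ M₂ I ht2, ← e_mul_E1 k M₁ M₂ J ht1]
  simp only [mul_assoc]
  rw [← mul_assoc (xOm k P (Sum.inr t)), ← mul_assoc (1 - eOm k P (Sum.inl t')),
    oneSub_x_e k M₁ M₂ t' t, zero_mul, mul_zero]

lemma sandwich (I J : Finset B₁) {s : B₁} (hs1 : s ∈ I) (hs2 : s ∉ J)
    {t' : B₁} (ht1 : t' ∈ J) (ht2 : t' ∉ I) (t : B₂) :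
    E1 k M₁ M₂ I * (eOm k P (Sum.inr t) * xOm k P (Sum.inl s)) * E1 k M₁ M₂ J
      = E1 k M₁ M₂ I * (xOm k P (Sum.inl s) * eOm k P (Sum.inr t)) * E1 k M₁ M₂ J := by
  have hex : eOm k P (Sum.inr t) * xOm k P (Sum.inl s)
      = eOm k P (Sum.inl s) * xOm k P (Sum.inr t)
        + xOm k P (Sum.inl s) * eOm k P (Sum.inr t)
        - xOm k P (Sum.inr t) * eOm k P (Sum.inl s) :=
    eq_sub_of_add_eq (star_rel k M₁ M₂ s t)
  have T1 : E1 k M₁ M₂ I * (eOm k P (Sum.inl s) * xOm k P (Sum.inr t)) * E1 k M₁ M₂ J = 0 := by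
    rw [← mul_assoc, E1_mul_e k M₁ M₂ I hs1, x_mid_zero k M₁ M₂ I J ht1 ht2 t]
  have T3 : E1 k M₁ M₂ I * (xOm k P (Sum.inr t) * eOm k P (Sum.inl s)) * E1 k M₁ M₂ J = 0 := by
    rw [mul_assoc, mul_assoc, e_mul_E1_zero k M₁ M₂ J hs2, mul_zero, mul_zero]
  rw [hex, mul_sub, sub_mul, mul_add, add_mul, T1, T3, zero_add, sub_zero]

lemma commute_e_Y (I J : Finset B₁) {s : B₁} (hs1 : s ∈ I) (hs2 : s ∉ J)
    {t' : B₁} (ht1 : t' ∈ J) (ht2 : t' ∉ I) (t : B₂) :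
    Commute (eOm k P (Sum.inr t)) (E1 k M₁ M₂ I * xOm k P (Sum.inl s) * E1 k M₁ M₂ J) := by
  show _ = _
  calc eOm k P (Sum.inr t) * (E1 k M₁ M₂ I * xOm k P (Sum.inl s) * E1 k M₁ M₂ J)
      = (eOm k P (Sum.inr t) * E1 k M₁ M₂ I) * xOm k P (Sum.inl s) * E1 k M₁ M₂ J := by
        simp only [mul_assoc]
    _ = (E1 k M₁ M₂ I * eOm k P (Sum.inr t)) * xOm k P (Sum.inl s) * E1 k M₁ M₂ J := by
        rw [(commute_eOm_E1 k M₁ M₂ (Sum.inr t) I).eq]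
    _ = E1 k M₁ M₂ I * (eOm k P (Sum.inr t) * xOm k P (Sum.inl s)) * E1 k M₁ M₂ J := by
        simp only [mul_assoc]
    _ = E1 k M₁ M₂ I * (xOm k P (Sum.inl s) * eOm k P (Sum.inr t)) * E1 k M₁ M₂ J := by
        rw [sandwich k M₁ M₂ I J hs1 hs2 ht1 ht2 t]
    _ = E1 k M₁ M₂ I * xOm k P (Sum.inl s) * (eOm k P (Sum.inr t) * E1 k M₁ M₂ J) := by
        simp only [mul_assoc]
    _ = E1 k M₁ M₂ I * xOm k P (Sum.inl s) * (E1 k M₁ M₂ J * eOm k P (Sum.inr t)) := by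
        rw [(commute_eOm_E1 k M₁ M₂ (Sum.inr t) J).eq]
    _ = (E1 k M₁ M₂ I * xOm k P (Sum.inl s) * E1 k M₁ M₂ J) * eOm k P (Sum.inr t) := by
        simp only [mul_assoc]

lemma commute_E2_Y (I J : Finset B₁) {s : B₁} (hs1 : s ∈ I) (hs2 : s ∉ J)
    {t' : B₁} (ht1 : t' ∈ J) (ht2 : t' ∉ I) (K : Finset B₂) :
    Commute (E2 k M₁ M₂ K) (E1 k M₁ M₂ I * xOm k P (Sum.inl s) * E1 k M₁ M₂ J) := by
  refine Commute.mul_left ?_ ?_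
  · exact (commute_Pe2 k M₁ M₂ _ K fun b =>
      (commute_e_Y k M₁ M₂ I J hs1 hs2 ht1 ht2 b).symm).symm
  · exact (commute_Pn2 k M₁ M₂ _ Kᶜ fun b =>
      (commute_e_Y k M₁ M₂ I J hs1 hs2 ht1 ht2 b).symm).symm

lemma XOm_fjoin (I J : Finset B₁) {s : B₁} (hs1 : s ∈ I) (hs2 : s ∉ J)
    {t' : B₁} (ht1 : t' ∈ J) (ht2 : t' ∉ I) (K : Finset B₂) :
    XOm k P (fjoin I K) (fjoin J K) (Sum.inl s)
      = (E1 k M₁ M₂ I * xOm k P (Sum.inl s) * E1 k M₁ M₂ J) * E2 k M₁ M₂ K := by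
  rw [XOm, EOm_fjoin k M₁ M₂ I K, EOm_fjoin k M₁ M₂ J K]
  calc E1 k M₁ M₂ I * E2 k M₁ M₂ K * xOm k P (Sum.inl s) * (E1 k M₁ M₂ J * E2 k M₁ M₂ K)
      = (E1 k M₁ M₂ I * E2 k M₁ M₂ K) * xOm k P (Sum.inl s) * (E1 k M₁ M₂ J * E2 k M₁ M₂ K) := by
        simp only [mul_assoc]
    _ = (E2 k M₁ M₂ K * E1 k M₁ M₂ I) * xOm k P (Sum.inl s) * (E1 k M₁ M₂ J * E2 k M₁ M₂ K) := by
        rw [(commute_E1_E2 k M₁ M₂ I K).eq]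
    _ = E2 k M₁ M₂ K * (E1 k M₁ M₂ I * xOm k P (Sum.inl s) * E1 k M₁ M₂ J) * E2 k M₁ M₂ K := by
        simp only [mul_assoc]
    _ = (E1 k M₁ M₂ I * xOm k P (Sum.inl s) * E1 k M₁ M₂ J) * E2 k M₁ M₂ K * E2 k M₁ M₂ K := by
        rw [(commute_E2_Y k M₁ M₂ I J hs1 hs2 ht1 ht2 K).eq]
    _ = (E1 k M₁ M₂ I * xOm k P (Sum.inl s) * E1 k M₁ M₂ J) * (E2 k M₁ M₂ K * E2 k M₁ M₂ K) := by
        rw [mul_assoc]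
    _ = (E1 k M₁ M₂ I * xOm k P (Sum.inl s) * E1 k M₁ M₂ J) * E2 k M₁ M₂ K := by
        rw [E2_idem k M₁ M₂ K]

lemma f1_EOm (f₁ : Omega k M₁ →+* Omega k P) (h₁ : Parab1Cond k M₁ M₂ ⇑f₁) (I : Finset B₁) :
    f₁ (EOm k M₁ I) = E1 k M₁ M₂ I := by
  rw [EOm, map_mul, E1]
  congr 1
  · rw [Pe1]
    exact (Finset.map_noncommProd _ _ _ f₁).trans <| Finset.noncommProd_congr rfl (fun b _ => (h₁ b).1) _
  · rw [Pn1]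
    exact (Finset.map_noncommProd _ _ _ f₁).trans <| Finset.noncommProd_congr rfl (fun b _ => by rw [map_sub, map_one, (h₁ b).1]) _

lemma f2_EOm (f₂ : Omega k M₂ →+* Omega k P) (h₂ : Parab2Cond k M₁ M₂ ⇑f₂) (K : Finset B₂) :
    f₂ (EOm k M₂ K) = E2 k M₁ M₂ K := by
  rw [EOm, map_mul, E2]
  congr 1
  · rw [Pe2]
    exact (Finset.map_noncommProd _ _ _ f₂).trans <| Finset.noncommProd_congr rfl (fun b _ => (h₂ b).1) _
  · rw [Pn2]
    exact (Finset.map_noncommProd _ _ _ f₂).trans <| Finset.noncommProd_congr rfl (fun b _ => by rw [map_sub, map_one, (h₂ b).1]) _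

end ProdAux
/-- for transversal edges `I ⇆ J` in `Q_{W₁}` and `K ⊆ S₂` one has
`ι₁(X_{IJ}) ι₂(E_K) = X_{I⊔K, J⊔K} = ι₂(E_K) ι₁(X_{IJ})` in `Ω(W,S)`. -/
theorem statement11 {B₁ B₂ : Type*} [Fintype B₁] [DecidableEq B₁] [Fintype B₂]
    [DecidableEq B₂] (M₁ : CoxeterMatrix B₁) (M₂ : CoxeterMatrix B₂)
    {W₁ W₂ : Type*} [Group W₁] [Group W₂] [Finite W₁] [Finite W₂]
    (cs₁ : CoxeterSystem M₁ W₁) (cs₂ : CoxeterSystem M₂ W₂)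
    (cs : CoxeterSystem (prodMatrix M₁ M₂) (W₁ × W₂))
    (f₁ : Omega ℤ M₁ →+* Omega ℤ (prodMatrix M₁ M₂))
    (f₂ : Omega ℤ M₂ →+* Omega ℤ (prodMatrix M₁ M₂))
    (h₁ : Parab1Cond ℤ M₁ M₂ ⇑f₁) (h₂ : Parab2Cond ℤ M₁ M₂ ⇑f₂)
    (I J : Finset B₁) (hIJ : Transversal M₁ I J) (s : B₁) (hs : s ∈ I \ J)
    (K : Finset B₂) :
    f₁ (XOm ℤ M₁ I J s) * f₂ (EOm ℤ M₂ K) =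
      XOm ℤ (prodMatrix M₁ M₂) (fjoin I K) (fjoin J K) (Sum.inl s) ∧
    f₂ (EOm ℤ M₂ K) * f₁ (XOm ℤ M₁ I J s) =
      XOm ℤ (prodMatrix M₁ M₂) (fjoin I K) (fjoin J K) (Sum.inl s) := by
  classical
  have hs1 : s ∈ I := (Finset.mem_sdiff.mp hs).1
  have hs2 : s ∉ J := (Finset.mem_sdiff.mp hs).2
  obtain ⟨t', ht'⟩ := hIJ.2
  have ht1 : t' ∈ J := (Finset.mem_sdiff.mp ht').1
  have ht2 : t' ∉ I := (Finset.mem_sdiff.mp ht').2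
  have hf1X : f₁ (XOm ℤ M₁ I J s)
      = E1 ℤ M₁ M₂ I * xOm ℤ (prodMatrix M₁ M₂) (Sum.inl s) * E1 ℤ M₁ M₂ J := by
    rw [XOm, map_mul, map_mul, f1_EOm ℤ M₁ M₂ f₁ h₁, f1_EOm ℤ M₁ M₂ f₁ h₁, (h₁ s).2]
  have hf2E := f2_EOm ℤ M₁ M₂ f₂ h₂ K
  have hX := XOm_fjoin ℤ M₁ M₂ I J hs1 hs2 ht1 ht2 K
  refine ⟨?_, ?_⟩
  · rw [hf1X, hf2E, hX]
  · rw [hf1X, hf2E, hX, (commute_E2_Y ℤ M₁ M₂ I J hs1 hs2 ht1 ht2 K).eq]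

end WGraphPaper

end
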